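/- For every integer ℓ ≥ 3, a(ℓ,0) − (1/2)·( b(ℓ,0) + b(ℓ−1,0) ) = (1/(4π(ℓ+1)(ℓ+3)))·( (ℓ² + 4ℓ + 15)/((ℓ+1)(ℓ+3)) − 18/85 ), and this quantity is strictly positive. -/
import Mathlib


/-- The diagonal coefficient `a(ℓ, m₁)` of the tridiagonal quadratic form. -/
noncomputable def acoef (ℓ : ℕ) (m₁ : ℤ) : ℝ :=
  (1 / (4 * Real.pi)) *
      ((ℓ : ℝ) ^ 4 + 8 * (ℓ : ℝ) ^ 3 + 11 * (ℓ : ℝ) ^ 2 - 20 * (ℓ : ℝ) - 12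
        + 6 * (m₁ : ℝ) ^ 2 + 18 * (m₁ : ℝ)) / (((ℓ : ℝ) + 1) ^ 2 * ((ℓ : ℝ) + 3) ^ 2)
    - (36 / 85) * (1 / (8 * Real.pi)) * ((ℓ : ℝ) + 2) ^ 2 / (((ℓ : ℝ) + 1) * ((ℓ : ℝ) + 3))

/-- The off-diagonal coefficient `b(ℓ, m₁)` of the tridiagonal quadratic form. -/
noncomputable def bcoef (ℓ : ℕ) (m₁ : ℤ) : ℝ :=
  Real.sqrt ((((ℓ : ℝ) + 1 - (m₁ : ℝ)) * ((ℓ : ℝ) + 4 + (m₁ : ℝ))) /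
      (((ℓ : ℝ) + 1) * ((ℓ : ℝ) + 4))) *
    ((1 / (4 * Real.pi)) * (((ℓ : ℝ) - 1) * ((ℓ : ℝ) + 6)) / (((ℓ : ℝ) + 2) * ((ℓ : ℝ) + 3))
      - (36 / 85) * (1 / (8 * Real.pi)))

lemma bcoef_zero (n : ℕ) :
    bcoef n 0 = (1 / (4 * Real.pi)) * (((n : ℝ) - 1) * ((n : ℝ) + 6)) /
        (((n : ℝ) + 2) * ((n : ℝ) + 3)) - (36 / 85) * (1 / (8 * Real.pi)) := by
  unfold bcoef
  have h : (0 : ℝ) < ((n : ℝ) + 1) * ((n : ℝ) + 4) := by positivity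
  simp only [Int.cast_zero, sub_zero, add_zero]
  rw [div_self h.ne', Real.sqrt_one, one_mul]

/-- For every `ℓ ≥ 3`,
`a(ℓ,0) − (b(ℓ,0) + b(ℓ−1,0))/2
  = (1/(4π(ℓ+1)(ℓ+3)))·((ℓ² + 4ℓ + 15)/((ℓ+1)(ℓ+3)) − 18/85)`,
and this quantity is strictly positive. -/
theorem higher_rows_strict_dominance (ℓ : ℕ) (hℓ : 3 ≤ ℓ) :
    acoef ℓ 0 - (1 / 2) * (bcoef ℓ 0 + bcoef (ℓ - 1) 0)
      = (1 / (4 * Real.pi * ((ℓ : ℝ) + 1) * ((ℓ : ℝ) + 3))) *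
          (((ℓ : ℝ) ^ 2 + 4 * (ℓ : ℝ) + 15) / (((ℓ : ℝ) + 1) * ((ℓ : ℝ) + 3)) - 18 / 85) ∧
    0 < acoef ℓ 0 - (1 / 2) * (bcoef ℓ 0 + bcoef (ℓ - 1) 0) := by
  have hL : (3 : ℝ) ≤ (ℓ : ℝ) := by exact_mod_cast hℓ
  have hc : ((ℓ - 1 : ℕ) : ℝ) = (ℓ : ℝ) - 1 := by
    have : (1 : ℕ) ≤ ℓ := by omega
    push_cast [this]; ring
  have hπ : (0 : ℝ) < Real.pi := Real.pi_pos
  have h1 : ((ℓ : ℝ) + 1) ≠ 0 := by nlinarith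
  have h2 : ((ℓ : ℝ) + 2) ≠ 0 := by nlinarith
  have h3 : ((ℓ : ℝ) + 3) ≠ 0 := by nlinarith
  have heq : acoef ℓ 0 - (1 / 2) * (bcoef ℓ 0 + bcoef (ℓ - 1) 0)
      = (1 / (4 * Real.pi * ((ℓ : ℝ) + 1) * ((ℓ : ℝ) + 3))) *
          (((ℓ : ℝ) ^ 2 + 4 * (ℓ : ℝ) + 15) / (((ℓ : ℝ) + 1) * ((ℓ : ℝ) + 3)) - 18 / 85) := by
    rw [bcoef_zero, bcoef_zero, hc]
    unfold acoef
    simp only [Int.cast_zero]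
    have hm1 : ((ℓ : ℝ) - 1) + 2 = (ℓ : ℝ) + 1 := by ring
    have hm2 : ((ℓ : ℝ) - 1) + 3 = (ℓ : ℝ) + 2 := by ring
    rw [hm1, hm2]
    field_simp
    ring
  refine ⟨heq, ?_⟩
  rw [heq]
  have hfac : 0 < 1 / (4 * Real.pi * ((ℓ : ℝ) + 1) * ((ℓ : ℝ) + 3)) := by positivity
  have hpar : 0 < ((ℓ : ℝ) ^ 2 + 4 * (ℓ : ℝ) + 15) / (((ℓ : ℝ) + 1) * ((ℓ : ℝ) + 3)) - 18 / 85 := by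
    have hden : (0 : ℝ) < ((ℓ : ℝ) + 1) * ((ℓ : ℝ) + 3) := by positivity
    rw [sub_pos, div_lt_div_iff₀ (by norm_num) hden]
    nlinarith
  exact mul_pos hfac hpar
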